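/- Let n ≥ 1 and 1 ≤ k ≤ n. If κ = (κ_1, …, κ_n) ∈ Γ_k with κ_1 ≥ κ_2 ≥ ⋯ ≥ κ_n, and κ_i ≤ 0 for some index i, then −κ_i ≤ ((n−k)/k) · κ_1. -/

import Mathlib

open Finset

/-- The `k`-th elementary symmetric polynomial of `κ : Fin n → ℝ`. -/
noncomputable def esymm {n : ℕ} (k : ℕ) (κ : Fin n → ℝ) : ℝ :=
  ∑ s ∈ Finset.univ.powersetCard k, ∏ i ∈ s, κ i

/-- `σ_k(κ|i)`: the `k`-th elementary symmetric polynomial of the tuple obtained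
from `κ` by deleting the entry `κ i`. -/
noncomputable def esymmDel {n : ℕ} (k : ℕ) (κ : Fin n → ℝ) (i : Fin n) : ℝ :=
  ∑ s ∈ ({i}ᶜ : Finset (Fin n)).powersetCard k, ∏ j ∈ s, κ j

/-- `σ_k(κ|i,j)`: the `k`-th elementary symmetric polynomial of the tuple obtained
from `κ` by deleting the entries `κ i` and `κ j`. -/
noncomputable def esymmDel2 {n : ℕ} (k : ℕ) (κ : Fin n → ℝ) (i j : Fin n) : ℝ :=
  ∑ s ∈ ({i, j}ᶜ : Finset (Fin n)).powersetCard k, ∏ l ∈ s, κ l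

/-- The Garding cone `Γ_k = {κ : σ_j(κ) > 0 for all 1 ≤ j ≤ k}`. -/
def GardingCone {n : ℕ} (k : ℕ) : Set (Fin n → ℝ) :=
  {κ | ∀ j : ℕ, 1 ≤ j → j ≤ k → 0 < esymm j κ}

section Auxiliary

open Polynomial

namespace StmtAux

variable {ι : Type*}

noncomputable def Es (κ : ι → ℝ) (l : ℕ) (A : Finset ι) : ℝ :=
  ∑ s ∈ A.powersetCard l, ∏ i ∈ s, κ i

lemma Es_zero (κ : ι → ℝ) (A : Finset ι) : Es κ 0 A = 1 := by
  simp [Es]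

lemma Es_one (κ : ι → ℝ) (A : Finset ι) : Es κ 1 A = ∑ i ∈ A, κ i := by
  rw [Es, powersetCard_one, Finset.sum_map]
  simp

lemma Es_self (κ : ι → ℝ) (A : Finset ι) : Es κ A.card A = ∏ i ∈ A, κ i := by
  rw [Es, powersetCard_self, Finset.sum_singleton]

lemma Es_eq_zero (κ : ι → ℝ) {l : ℕ} {A : Finset ι} (h : A.card < l) :
    Es κ l A = 0 := by
  simp [Es, powersetCard_eq_empty.2 h]

lemma le_card_of_Es_ne_zero {κ : ι → ℝ} {l : ℕ} {A : Finset ι}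
    (h : Es κ l A ≠ 0) : l ≤ A.card := by
  by_contra hc
  exact h (Es_eq_zero κ (by omega))

variable [DecidableEq ι]

/-- Insert-splitting of elementary symmetric sums. -/
lemma Es_insert (κ : ι → ℝ) {i : ι} {B : Finset ι} (h : i ∉ B) (l : ℕ) :
    Es κ (l + 1) (insert i B) = Es κ (l + 1) B + κ i * Es κ l B := by
  rw [Es, powersetCard_succ_insert h]
  rw [Finset.sum_union]
  · congr 1
    rw [Finset.sum_image ?inj]
    case inj =>
      intro s hs t ht hst
      rw [Finset.mem_coe, mem_powersetCard] at hs ht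
      have hi_s : i ∉ s := fun hh => h (hs.1 hh)
      have hi_t : i ∉ t := fun hh => h (ht.1 hh)
      have := congrArg (Finset.erase · i) hst
      simpa [Finset.erase_insert hi_s, Finset.erase_insert hi_t] using this
    rw [Es, Finset.mul_sum]
    refine Finset.sum_congr rfl fun s hs => ?_
    rw [mem_powersetCard] at hs
    have hi_s : i ∉ s := fun hh => h (hs.1 hh)
    rw [Finset.prod_insert hi_s]
  · rw [Finset.disjoint_left]
    intro s hs hs'
    rw [mem_powersetCard] at hs
    obtain ⟨t, ht, rfl⟩ := Finset.mem_image.1 hs'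
    rw [mem_powersetCard] at ht
    exact h (hs.1 (Finset.mem_insert_self i t))

lemma Es_erase (κ : ι → ℝ) {i : ι} {A : Finset ι} (h : i ∈ A) (l : ℕ) :
    Es κ (l + 1) A = Es κ (l + 1) (A.erase i) + κ i * Es κ l (A.erase i) := by
  conv_lhs => rw [← Finset.insert_erase h]
  exact Es_insert κ (Finset.notMem_erase i A) l

/-- Deleting a nonpositive entry preserves positivity of the symmetric functions. -/
lemma Es_erase_pos {κ : ι → ℝ} {k : ℕ} {A : Finset ι} {i : ι}
    (hA : ∀ l, 1 ≤ l → l ≤ k → 0 < Es κ l A) (hi : i ∈ A) (hneg : κ i ≤ 0) :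
    ∀ l ≤ k, 0 < Es κ l (A.erase i) := by
  intro l
  induction l with
  | zero => intro _; rw [Es_zero]; norm_num
  | succ l ih =>
    intro hlk
    have h1 := hA (l + 1) (by omega) hlk
    rw [Es_erase κ hi l] at h1
    have h2 := ih (by omega)
    nlinarith [mul_nonpos_of_nonpos_of_nonneg hneg h2.le]

lemma powersetCard_erase (κ : ι → ℝ) {A : Finset ι} {j : ι} (l : ℕ) :
    (A.erase j).powersetCard l = (A.powersetCard l).filter (fun s => j ∉ s) := by
  ext s
  simp only [mem_powersetCard, mem_filter, Finset.subset_erase]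
  tauto

/-- Counting identity: `∑_{j ∈ A} σ_l(A \ j) = (|A| - l) σ_l(A)`. -/
lemma Es_count (κ : ι → ℝ) (A : Finset ι) (l : ℕ) :
    ∑ j ∈ A, Es κ l (A.erase j) = ((A.card - l : ℕ) : ℝ) * Es κ l A := by
  have key : ∀ j : ι, Es κ l (A.erase j)
      = ∑ s ∈ A.powersetCard l, if j ∉ s then ∏ i ∈ s, κ i else 0 := by
    intro j
    rw [Es, powersetCard_erase κ l, Finset.sum_filter]
  calc ∑ j ∈ A, Es κ l (A.erase j)
      = ∑ j ∈ A, ∑ s ∈ A.powersetCard l, if j ∉ s then ∏ i ∈ s, κ i else 0 :=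
        Finset.sum_congr rfl fun j _ => key j
    _ = ∑ s ∈ A.powersetCard l, ∑ j ∈ A, if j ∉ s then ∏ i ∈ s, κ i else 0 :=
        Finset.sum_comm
    _ = ∑ s ∈ A.powersetCard l, ((A.card - l : ℕ) : ℝ) * ∏ i ∈ s, κ i := by
        refine Finset.sum_congr rfl fun s hs => ?_
        rw [mem_powersetCard] at hs
        rw [Finset.sum_ite, Finset.sum_const_zero, add_zero, Finset.sum_const]
        have : A.filter (fun j => j ∉ s) = A \ s := by
          ext x; simp [Finset.mem_sdiff, Finset.mem_filter]
        rw [this, Finset.card_sdiff_of_subset hs.1, hs.2, nsmul_eq_mul]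
    _ = ((A.card - l : ℕ) : ℝ) * Es κ l A := by
        rw [Es, Finset.mul_sum]

end StmtAux

namespace Chunk3
open StmtAux
variable {ι : Type*} [DecidableEq ι]

/-- Weighted counting identity: `∑_{j ∈ A} κ_j σ_l(A \ j) = (l+1) σ_{l+1}(A)`. -/
lemma Es_weight (κ : ι → ℝ) (A : Finset ι) (l : ℕ) :
    ∑ j ∈ A, κ j * Es κ l (A.erase j) = ((l : ℝ) + 1) * Es κ (l + 1) A := by
  have rhs : ((l : ℝ) + 1) * Es κ (l + 1) A
      = ∑ t ∈ A.powersetCard (l + 1), ∑ j ∈ t, κ j * ∏ i ∈ t.erase j, κ i := by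
    rw [Es, Finset.mul_sum]
    refine Finset.sum_congr rfl fun t ht => ?_
    rw [mem_powersetCard] at ht
    rw [Finset.sum_congr rfl (fun j hj => Finset.mul_prod_erase t κ hj),
      Finset.sum_const, ht.2, nsmul_eq_mul]
    push_cast; ring
  rw [rhs]
  simp_rw [Es, Finset.mul_sum]
  rw [Finset.sum_sigma' A (fun j => (A.erase j).powersetCard l)
    (fun j s => κ j * ∏ i ∈ s, κ i)]
  rw [Finset.sum_sigma' (A.powersetCard (l + 1)) (fun t => t)
    (fun t j => κ j * ∏ i ∈ t.erase j, κ i)]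
  refine Finset.sum_nbij' (fun x => ⟨insert x.1 x.2, x.1⟩) (fun x => ⟨x.2, x.1.erase x.2⟩)
    ?_ ?_ ?_ ?_ ?_
  · rintro ⟨j, s⟩ hx
    rw [Finset.mem_sigma] at hx
    obtain ⟨hj, hs⟩ := hx
    rw [mem_powersetCard] at hs
    have hjs : j ∉ s := fun h => (Finset.mem_erase.1 (hs.1 h)).1 rfl
    rw [Finset.mem_sigma, mem_powersetCard]
    refine ⟨⟨?_, ?_⟩, Finset.mem_insert_self j s⟩
    · intro x hx
      rcases Finset.mem_insert.1 hx with rfl | hx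
      · exact hj
      · exact Finset.mem_of_mem_erase (hs.1 hx)
    · rw [Finset.card_insert_of_notMem hjs, hs.2]
  · rintro ⟨t, j⟩ hx
    rw [Finset.mem_sigma] at hx
    obtain ⟨ht, hj⟩ := hx
    rw [mem_powersetCard] at ht
    rw [Finset.mem_sigma, mem_powersetCard]
    refine ⟨ht.1 hj, ?_, ?_⟩
    · exact Finset.erase_subset_erase j ht.1
    · rw [Finset.card_erase_of_mem hj, ht.2]; omega
  · rintro ⟨j, s⟩ hx
    rw [Finset.mem_sigma] at hx
    obtain ⟨hj, hs⟩ := hx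
    rw [mem_powersetCard] at hs
    have hjs : j ∉ s := fun h => (Finset.mem_erase.1 (hs.1 h)).1 rfl
    simp [Finset.erase_insert hjs]
  · rintro ⟨t, j⟩ hx
    rw [Finset.mem_sigma] at hx
    simp [Finset.insert_erase hx.2]
  · rintro ⟨j, s⟩ hx
    rw [Finset.mem_sigma] at hx
    obtain ⟨hj, hs⟩ := hx
    rw [mem_powersetCard] at hs
    have hjs : j ∉ s := fun h => (Finset.mem_erase.1 (hs.1 h)).1 rfl
    simp [Finset.erase_insert hjs]

end Chunk3

namespace Chunk4
open StmtAux
variable {ι : Type*} [DecidableEq ι]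

/-- Complementation identity: `σ_j(y) = (∏ y) σ_{card - j}(y⁻¹)`. -/
lemma Es_compl (y : ι → ℝ) (u : Finset ι) (hy : ∀ i ∈ u, y i ≠ 0) {j : ℕ} (hj : j ≤ u.card) :
    Es y j u = (∏ i ∈ u, y i) * Es (fun i => (y i)⁻¹) (u.card - j) u := by
  rw [Es, Es, Finset.mul_sum]
  refine Finset.sum_nbij' (fun s => u \ s) (fun t => u \ t) ?_ ?_ ?_ ?_ ?_
  · intro s hs
    rw [mem_powersetCard] at hs
    rw [mem_powersetCard]
    exact ⟨Finset.sdiff_subset, by rw [Finset.card_sdiff_of_subset hs.1, hs.2]⟩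
  · intro t ht
    rw [mem_powersetCard] at ht
    rw [mem_powersetCard]
    refine ⟨Finset.sdiff_subset, ?_⟩
    rw [Finset.card_sdiff_of_subset ht.1, ht.2]
    omega
  · intro s hs
    rw [mem_powersetCard] at hs
    exact Finset.sdiff_sdiff_eq_self hs.1
  · intro t ht
    rw [mem_powersetCard] at ht
    exact Finset.sdiff_sdiff_eq_self ht.1
  · intro s hs
    rw [mem_powersetCard] at hs
    have hsplit : (∏ i ∈ s, y i) * (∏ i ∈ u \ s, y i) = ∏ i ∈ u, y i := by
      rw [mul_comm]; exact Finset.prod_sdiff hs.1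
    have hne : (∏ i ∈ u \ s, y i) ≠ 0 :=
      Finset.prod_ne_zero_iff.2 fun i hi => hy i (Finset.mem_sdiff.1 hi).1
    rw [Finset.prod_inv_distrib]
    field_simp
    linarith [hsplit]

/-- `(∑ y)² = ∑ y² + 2 σ₂(y)`. -/
lemma Es_two (y : ι → ℝ) (u : Finset ι) :
    (∑ i ∈ u, y i) ^ 2 = (∑ i ∈ u, (y i) ^ 2) + 2 * Es y 2 u := by
  classical
  induction u using Finset.induction_on with
  | empty => simp [Es_eq_zero y (show (∅ : Finset ι).card < 2 by simp)]
  | insert a u h ih =>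
    rw [Finset.sum_insert h, Finset.sum_insert h,
      show (2 : ℕ) = 1 + 1 from rfl, Es_insert y h 1, Es_one]
    ring_nf
    ring_nf at ih
    nlinarith [ih]

lemma descFact1 (d : ℕ) : (d + 1).descFactorial d = (d + 1) * d.descFactorial d := by
  induction d with
  | zero => rfl
  | succ d ih =>
    rw [Nat.succ_descFactorial_succ, Nat.succ_descFactorial_succ, ih]

lemma descFact2 (d : ℕ) : (d + 2).descFactorial d * 2 = (d + 2) * (d + 1) * d.descFactorial d := by
  induction d with
  | zero => rfl
  | succ d ih =>
    rw [show d + 1 + 2 = (d + 2) + 1 from rfl, Nat.succ_descFactorial_succ,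
      Nat.succ_descFactorial_succ]
    nlinarith [ih]

lemma descFact_pos (d : ℕ) : 0 < d.descFactorial d := by
  rw [Nat.descFactorial_self]; exact Nat.factorial_pos d

end Chunk4

namespace Chunk5
open StmtAux Chunk4

lemma exists_enum (R : Multiset ℝ) :
    ∃ y : Fin (Multiset.card R) → ℝ, R = Finset.univ.val.map y := by
  induction R using Quotient.inductionOn with
  | h l => exact ⟨l.get, by show (l : Multiset ℝ) = Multiset.map l.get (Finset.univ : Finset (Fin l.length)).val; rw [Fin.univ_val_map, List.ofFn_get]⟩

lemma fin_newton {k : ℕ} (h2 : 2 ≤ k) (y : Fin k → ℝ) (hy : ∀ i, y i ≠ 0) :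
    2 * (k : ℝ) * (Es y k Finset.univ * Es y (k - 2) Finset.univ)
      ≤ ((k : ℝ) - 1) * Es y (k - 1) Finset.univ ^ 2 := by
  classical
  have hcard : (Finset.univ : Finset (Fin k)).card = k := by simp
  have hy' : ∀ i ∈ (Finset.univ : Finset (Fin k)), y i ≠ 0 := fun i _ => hy i
  set z : Fin k → ℝ := fun i => (y i)⁻¹ with hz
  have h1 : Es y (k - 1) Finset.univ = (∏ i, y i) * Es z 1 Finset.univ := by
    have := Es_compl y Finset.univ hy' (j := k - 1) (by omega)
    rw [this, hcard]
    congr 2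
    omega
  have h2' : Es y (k - 2) Finset.univ = (∏ i, y i) * Es z 2 Finset.univ := by
    have := Es_compl y Finset.univ hy' (j := k - 2) (by omega)
    rw [this, hcard]
    congr 2
    omega
  have h0 : Es y k Finset.univ = ∏ i, y i := by
    have := Es_self y (Finset.univ : Finset (Fin k))
    rw [hcard] at this
    rw [this]
  rw [h0, h1, h2', Es_one]
  have hsq := sq_sum_le_card_mul_sum_sq (s := (Finset.univ : Finset (Fin k))) (f := z)
  rw [hcard] at hsq
  have htwo := Es_two z (Finset.univ : Finset (Fin k))
  set P := ∏ i, y i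
  set Sz := ∑ i, z i
  set Sz2 := ∑ i, z i ^ 2
  have hE2 : Es z 2 Finset.univ = (Sz ^ 2 - Sz2) / 2 := by
    rw [htwo] at *
    linarith [htwo]
  rw [hE2]
  nlinarith [mul_le_mul_of_nonneg_left hsq (sq_nonneg P)]

lemma multiset_newton (R : Multiset ℝ) (hR : ∀ r ∈ R, r ≠ 0) (h2 : 2 ≤ Multiset.card R) :
    2 * (Multiset.card R : ℝ) * (R.esymm (Multiset.card R) * R.esymm (Multiset.card R - 2))
      ≤ ((Multiset.card R : ℝ) - 1) * R.esymm (Multiset.card R - 1) ^ 2 := by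
  obtain ⟨y, hy⟩ := exists_enum R
  have hes : ∀ j, R.esymm j = Es y j Finset.univ := by
    intro j
    conv_lhs => rw [hy]
    rw [Finset.esymm_map_val]
    rfl
  have hy0 : ∀ i, y i ≠ 0 := by
    intro i
    apply hR
    rw [hy]
    exact Multiset.mem_map_of_mem y (Finset.mem_univ i)
  simp only [hes]
  exact fin_newton h2 y hy0

end Chunk5

namespace Chunk6
open StmtAux Chunk4 Chunk5 Polynomial
variable {ι : Type*} [DecidableEq ι]

set_option maxHeartbeats 1600000 in
lemma newton (κ : ι → ℝ) (S : Finset ι) {k : ℕ} (hk2 : 2 ≤ k) (hkm : k ≤ S.card)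
    (hQ : 0 < Es κ k S) :
    Es κ (k - 2) S * Es κ k S ≤ Es κ (k - 1) S ^ 2 := by
  classical
  set m := S.card with hm
  set d := m - k with hd
  have hdm : d ≤ m := Nat.sub_le _ _
  set f : ℝ[X] := ∏ j ∈ S, (X + C (κ j)) with hf
  have hfmonic : f.Monic := monic_prod_of_monic _ _ (fun j _ => monic_X_add_C (κ j))
  have hf0 : f ≠ 0 := hfmonic.ne_zero
  have hfcoeff : ∀ t, t ≤ m → f.coeff t = Es κ (m - t) S := by
    intro t ht
    rw [hf, Finset.prod_X_add_C_coeff S κ ht]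
    rfl
  have hfeq : f = ((S.val.map fun j => -κ j).map fun a => X - C a).prod := by
    rw [hf, Finset.prod_eq_multiset_prod, Multiset.map_map]
    refine congrArg Multiset.prod (Multiset.map_congr rfl fun j _ => ?_)
    simp [sub_neg_eq_add]
  have hfroots : f.roots = S.val.map fun j => -κ j := by
    rw [hfeq, roots_multiset_prod_X_sub_C]
  have hfrootscard : Multiset.card f.roots = m := by rw [hfroots]; simp [hm]
  have hfdeg : f.natDegree = m := by
    rw [hf, natDegree_prod _ _ (fun j _ => (monic_X_add_C (κ j)).ne_zero)]
    simp [hm]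
  have iter : ∀ d', d' ≤ m → derivative^[d'] f ≠ 0 ∧ (derivative^[d'] f).natDegree = m - d'
      ∧ Multiset.card (derivative^[d'] f).roots = m - d' := by
    intro d'
    induction d' with
    | zero =>
      intro _
      exact ⟨hf0, by simpa using hfdeg, by simpa using hfrootscard⟩
    | succ e ih =>
      intro he
      obtain ⟨h0, hdeg, hroots⟩ := ih (by omega)
      have hdegne : (derivative^[e] f).natDegree ≠ 0 := by omega
      have hd0 : derivative (derivative^[e] f) ≠ 0 := fun hcon =>
        hdegne (natDegree_eq_zero_of_derivative_eq_zero hcon)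
      have le1 := card_roots_le_derivative (derivative^[e] f)
      have le2 := card_roots' (derivative (derivative^[e] f))
      have le3 := natDegree_derivative_le (derivative^[e] f)
      rw [Function.iterate_succ_apply']
      exact ⟨hd0, by omega, by omega⟩
  set q : ℝ[X] := derivative^[d] f with hq
  obtain ⟨hq0, hqdeg, hqroots⟩ := iter d hdm
  have hk_eq : m - d = k := by omega
  have hqcoeff : ∀ t, t + d ≤ m →
      q.coeff t = ((t + d).descFactorial d : ℝ) * Es κ (m - (t + d)) S := by
    intro t ht
    rw [hq, coeff_iterate_derivative, hfcoeff _ ht, nsmul_eq_mul]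
  have ha0 : q.coeff 0 = (d.descFactorial d : ℝ) * Es κ k S := by
    have h := hqcoeff 0 (by omega)
    rw [h, show 0 + d = d by omega, hk_eq]
  have ha1 : q.coeff 1 = ((d + 1).descFactorial d : ℝ) * Es κ (k - 1) S := by
    have h := hqcoeff 1 (by omega)
    rw [h, show 1 + d = d + 1 by omega, show m - (d + 1) = k - 1 by omega]
  have ha2 : q.coeff 2 = ((d + 2).descFactorial d : ℝ) * Es κ (k - 2) S := by
    have h := hqcoeff 2 (by omega)
    rw [h, show 2 + d = d + 2 by omega, show m - (d + 2) = k - 2 by omega]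
  have hsplits : q.Splits := splits_iff_card_roots.2 (by rw [hqroots, hqdeg])
  have hprod := hsplits.eq_prod_roots
  have hc : q.leadingCoeff ≠ 0 := leadingCoeff_ne_zero.2 hq0
  set c := q.leadingCoeff with hcdef
  set R : Multiset ℝ := q.roots with hR
  have hRcard : Multiset.card R = k := by rw [hR, hqroots, hk_eq]
  have hcoeff_eq : ∀ t, t ≤ k → q.coeff t = c * ((-1) ^ (k - t) * R.esymm (k - t)) := by
    intro t ht
    conv_lhs => rw [hprod]
    rw [coeff_C_mul, Multiset.prod_X_sub_C_coeff R (by omega : t ≤ Multiset.card R), hRcard]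
  have ha0ne : q.coeff 0 ≠ 0 := by
    rw [ha0]
    have hdp : (0 : ℝ) < (d.descFactorial d : ℝ) := by exact_mod_cast descFact_pos d
    exact (mul_pos hdp hQ).ne'
  have hnz : ∀ r ∈ R, r ≠ 0 := by
    intro r hr h0
    subst h0
    have : q.IsRoot 0 := isRoot_of_mem_roots hr
    rw [IsRoot, ← coeff_zero_eq_eval_zero] at this
    exact ha0ne this
  have hM := multiset_newton R hnz (by omega)
  rw [hRcard] at hM
  set Q := Es κ k S
  set P := Es κ (k - 1) S
  set R2 := Es κ (k - 2) S
  set c0 : ℝ := (d.descFactorial d : ℝ) with hc0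
  set c1 : ℝ := ((d + 1).descFactorial d : ℝ) with hc1
  set c2 : ℝ := ((d + 2).descFactorial d : ℝ) with hc2
  set e0 := R.esymm (k - 0) with he0
  set e1 := R.esymm (k - 1) with he1
  set e2 := R.esymm (k - 2) with he2
  have E0 : c0 * Q = c * ((-1) ^ (k - 0) * e0) := by rw [← ha0, hcoeff_eq 0 (by omega)]
  have E1 : c1 * P = c * ((-1) ^ (k - 1) * e1) := by rw [← ha1, hcoeff_eq 1 (by omega)]
  have E2 : c2 * R2 = c * ((-1) ^ (k - 2) * e2) := by rw [← ha2, hcoeff_eq 2 (by omega)]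
  have hsign1 : ((-1 : ℝ) ^ (k - 1)) ^ 2 = 1 := by
    rw [← pow_mul, mul_comm, pow_mul]
    norm_num
  have hsign2 : ((-1 : ℝ) ^ (k - 0)) * ((-1 : ℝ) ^ (k - 2)) = 1 := by
    rw [← pow_add, show k - 0 + (k - 2) = 2 * (k - 1) by omega, pow_mul]
    norm_num
  have key1 : c1 ^ 2 * P ^ 2 = c ^ 2 * e1 ^ 2 := by
    calc c1 ^ 2 * P ^ 2 = (c1 * P) ^ 2 := by ring
      _ = (c * ((-1 : ℝ) ^ (k - 1) * e1)) ^ 2 := by rw [E1]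
      _ = c ^ 2 * e1 ^ 2 := by
          rw [mul_pow, mul_pow, hsign1]
          ring
  have key2 : c0 * c2 * (Q * R2) = c ^ 2 * (e0 * e2) := by
    calc c0 * c2 * (Q * R2) = (c0 * Q) * (c2 * R2) := by ring
      _ = c ^ 2 * (e0 * e2) := by
          rw [E0, E2]
          have : c * ((-1 : ℝ) ^ (k - 0) * e0) * (c * ((-1 : ℝ) ^ (k - 2) * e2))
              = c ^ 2 * (((-1 : ℝ) ^ (k - 0)) * ((-1 : ℝ) ^ (k - 2))) * (e0 * e2) := by ring
          rw [this, hsign2, mul_one]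
  have hMM : 2 * (k : ℝ) * (e0 * e2) ≤ ((k : ℝ) - 1) * e1 ^ 2 := by
    simpa [he0, he1, he2, Nat.sub_zero] using hM
  have step : 2 * (k : ℝ) * (c0 * c2 * (Q * R2)) ≤ ((k : ℝ) - 1) * (c1 ^ 2 * P ^ 2) := by
    rw [key1, key2]
    calc 2 * (k : ℝ) * (c ^ 2 * (e0 * e2)) = c ^ 2 * (2 * (k : ℝ) * (e0 * e2)) := by ring
      _ ≤ c ^ 2 * (((k : ℝ) - 1) * e1 ^ 2) := mul_le_mul_of_nonneg_left hMM (sq_nonneg c)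
      _ = ((k : ℝ) - 1) * (c ^ 2 * e1 ^ 2) := by ring
  have h1 : c1 = ((d : ℝ) + 1) * c0 := by
    rw [hc1, hc0]
    have := congrArg (fun x : ℕ => (x : ℝ)) (descFact1 d)
    push_cast at this
    linarith [this]
  have h2 : 2 * c2 = ((d : ℝ) + 2) * ((d : ℝ) + 1) * c0 := by
    rw [hc2, hc0]
    have := congrArg (fun x : ℕ => (x : ℝ)) (descFact2 d)
    push_cast at this
    linarith [this]
  have hc0pos : (0 : ℝ) < c0 := by rw [hc0]; exact_mod_cast descFact_pos d
  have hc2pos : (0 : ℝ) < c2 := by nlinarith [h2, hc0pos, Nat.cast_nonneg (α := ℝ) d]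
  have hkk : (2 : ℝ) ≤ (k : ℝ) := by exact_mod_cast hk2
  have hdd : (0 : ℝ) ≤ (d : ℝ) := Nat.cast_nonneg d
  have base : ((k : ℝ) - 1) * (((d : ℝ) + 1) ^ 2) ≤ (k : ℝ) * (((d : ℝ) + 2) * ((d : ℝ) + 1)) := by
    nlinarith [hkk, hdd, mul_nonneg hdd hdd]
  have hcoefcmp : ((k : ℝ) - 1) * c1 ^ 2 ≤ 2 * (k : ℝ) * (c0 * c2) := by
    calc ((k : ℝ) - 1) * c1 ^ 2 = (((k : ℝ) - 1) * (((d : ℝ) + 1) ^ 2)) * c0 ^ 2 := by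
          rw [h1]; ring
      _ ≤ ((k : ℝ) * (((d : ℝ) + 2) * ((d : ℝ) + 1))) * c0 ^ 2 :=
          mul_le_mul_of_nonneg_right base (sq_nonneg c0)
      _ = 2 * (k : ℝ) * (c0 * c2) := by linear_combination (-((k : ℝ) * c0)) * h2
  have hfin : 2 * (k : ℝ) * (c0 * c2) * (Q * R2) ≤ 2 * (k : ℝ) * (c0 * c2) * P ^ 2 := by
    calc 2 * (k : ℝ) * (c0 * c2) * (Q * R2) = 2 * (k : ℝ) * (c0 * c2 * (Q * R2)) := by ring
      _ ≤ ((k : ℝ) - 1) * (c1 ^ 2 * P ^ 2) := step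
      _ = (((k : ℝ) - 1) * c1 ^ 2) * P ^ 2 := by ring
      _ ≤ (2 * (k : ℝ) * (c0 * c2)) * P ^ 2 :=
          mul_le_mul_of_nonneg_right hcoefcmp (sq_nonneg P)
  have hpos2 : 0 < 2 * (k : ℝ) * (c0 * c2) := by
    have hk0 : (0 : ℝ) < (k : ℝ) := by
      have : 0 < k := by omega
      exact_mod_cast this
    positivity
  have hQR := le_of_mul_le_mul_left hfin hpos2
  calc R2 * Q = Q * R2 := by ring
    _ ≤ P ^ 2 := hQR

end Chunk6

namespace Chunk7
open StmtAux Chunk3 Chunk4 Chunk5 Chunk6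
variable {ι : Type*} [DecidableEq ι]

/-- The hard lemma: if `κ ∈ Γ_k` on `A`, then `σ_{k-1}` of any deletion is positive. -/
lemma hard (κ : ι → ℝ) : ∀ k, 1 ≤ k → ∀ (A : Finset ι) (i : ι), i ∈ A →
    (∀ l, 1 ≤ l → l ≤ k → 0 < Es κ l A) → 0 < Es κ (k - 1) (A.erase i) := by
  intro k
  induction k with
  | zero => omega
  | succ k' ih =>
    intro _ A i hiA hA
    rcases Nat.eq_zero_or_pos k' with hk0 | hk'pos
    · subst hk0
      rw [show 1 - 1 = 0 from rfl, Es_zero]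
      norm_num
    have hR2 : 0 < Es κ (k' - 1) (A.erase i) :=
      ih hk'pos A i hiA (fun l h1 h2 => hA l h1 (by omega))
    rw [show k' + 1 - 1 = k' by omega]
    by_contra hPc
    push_neg at hPc
    set B := A.erase i with hBdef
    set P := Es κ k' B with hPdef
    set R2 := Es κ (k' - 1) B with hR2def
    set Q := Es κ (k' + 1) B with hQdef
    have hsk : 0 < Es κ (k' + 1) A := hA _ (by omega) le_rfl
    have hsk1 : 0 < Es κ k' A := hA _ (by omega) (by omega)
    have eq1 : Es κ (k' + 1) A = Q + κ i * P := Es_erase κ hiA k'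
    have eq2 : Es κ k' A = P + κ i * R2 := by
      have h := Es_erase κ hiA (k' - 1)
      rw [show k' - 1 + 1 = k' by omega] at h
      exact h
    have hki : 0 < κ i := by
      rcases le_or_gt (κ i) 0 with h | h
      · exfalso
        nlinarith [mul_nonpos_of_nonpos_of_nonneg h hR2.le]
      · exact h
    have hQpos : 0 < Q := by nlinarith [mul_nonneg hki.le (neg_nonneg.2 hPc)]
    have hkB : k' + 1 ≤ B.card := le_card_of_Es_ne_zero hQpos.ne'
    have hnewton := newton κ B (k := k' + 1) (by omega) hkB hQpos
    rw [show k' + 1 - 2 = k' - 1 by omega, show k' + 1 - 1 = k' by omega] at hnewton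
    -- hnewton : R2 * Q ≤ P ^ 2
    have h3 : P ^ 2 ≤ -P * (κ i * R2) := by
      have e : κ i * R2 = Es κ k' A - P := by linarith [eq2]
      have expand : -P * (κ i * R2) = -P * Es κ k' A + P ^ 2 := by rw [e]; ring
      rw [expand]
      nlinarith [mul_nonneg (neg_nonneg.2 hPc) hsk1.le]
    have h4 : -P * (κ i * R2) < Q * R2 := by
      have e' : κ i * -P = Q - Es κ (k' + 1) A := by linarith [eq1]
      have expand : -P * (κ i * R2) = (Q - Es κ (k' + 1) A) * R2 := by
        rw [← e']; ring
      rw [expand]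
      nlinarith [mul_pos hsk hR2]
    nlinarith [h3, h4, hnewton]

end Chunk7

namespace Main
open StmtAux Chunk3 Chunk4 Chunk5 Chunk6 Chunk7

theorem stmt_1' (n k : ℕ) (hn : 1 ≤ n) (hk1 : 1 ≤ k) (hk2 : k ≤ n)
    (κ : Fin n → ℝ) (hκ : ∀ j : ℕ, 1 ≤ j → j ≤ k → 0 < Es κ j Finset.univ)
    (hord : Antitone κ)
    (i : Fin n) (hi : κ i ≤ 0) :
    -κ i ≤ (((n : ℝ) - k) / k) * κ ⟨0, Nat.lt_of_lt_of_le Nat.zero_lt_one hn⟩ := by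
  classical
  set i0 : Fin n := ⟨0, by omega⟩ with hi0
  set M : Fin n := ⟨n - 1, by omega⟩ with hM
  have hiM : i ≤ M := by
    rw [hM, Fin.le_def]
    have := i.isLt
    simp
    omega
  have hκM : κ M ≤ 0 := le_trans (hord hiM) hi
  set B := (Finset.univ : Finset (Fin n)).erase M with hBdef
  have hB : ∀ l ≤ k, 0 < Es κ l B := Es_erase_pos hκ (Finset.mem_univ M) hκM
  have hBcard : B.card = n - 1 := by
    rw [hBdef, Finset.card_erase_of_mem (Finset.mem_univ M), Finset.card_univ, Fintype.card_fin]
  have hkB : k ≤ n - 1 := by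
    have := le_card_of_Es_ne_zero (hB k le_rfl).ne'
    omega
  have hPk1 : 0 < Es κ (k - 1) B := hB (k - 1) (by omega)
  -- key1 : -κ M * σ_{k-1}(B) < σ_k(B)
  have hsplitU : Es κ k Finset.univ = Es κ k B + κ M * Es κ (k - 1) B := by
    have h := Es_erase κ (Finset.mem_univ M) (k - 1)
    rw [show k - 1 + 1 = k by omega] at h
    exact h
  have key1 : -κ M * Es κ (k - 1) B < Es κ k B := by
    have h := hκ k hk1 le_rfl
    rw [hsplitU] at h
    nlinarith
  -- key3 : k σ_k(B) ≤ (n-k) κ i0 σ_{k-1}(B)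
  have hw := Es_weight κ B (k - 1)
  rw [show k - 1 + 1 = k by omega] at hw
  have hcast : ((k - 1 : ℕ) : ℝ) + 1 = (k : ℝ) := by
    rw [Nat.cast_sub hk1]
    ring
  rw [hcast] at hw
  -- bound each term
  have hterm : ∀ j ∈ B, κ j * Es κ (k - 1) (B.erase j) ≤ κ i0 * Es κ (k - 1) (B.erase j) := by
    intro j hj
    have hpos : 0 < Es κ (k - 1) (B.erase j) :=
      hard κ k hk1 B j hj (fun l h1 h2 => hB l h2)
    have hij : κ j ≤ κ i0 := hord (by rw [hi0, Fin.le_def]; simp)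
    exact mul_le_mul_of_nonneg_right hij hpos.le
  have hsum : (k : ℝ) * Es κ k B ≤ κ i0 * (((n - k : ℕ) : ℝ) * Es κ (k - 1) B) := by
    calc (k : ℝ) * Es κ k B = ∑ j ∈ B, κ j * Es κ (k - 1) (B.erase j) := hw.symm
      _ ≤ ∑ j ∈ B, κ i0 * Es κ (k - 1) (B.erase j) := Finset.sum_le_sum hterm
      _ = κ i0 * ∑ j ∈ B, Es κ (k - 1) (B.erase j) := by rw [Finset.mul_sum]
      _ = κ i0 * (((B.card - (k - 1) : ℕ) : ℝ) * Es κ (k - 1) B) := by rw [Es_count]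
      _ = κ i0 * (((n - k : ℕ) : ℝ) * Es κ (k - 1) B) := by
          rw [hBcard, show n - 1 - (k - 1) = n - k by omega]
  -- combine
  have hkpos : (0 : ℝ) < (k : ℝ) := by exact_mod_cast hk1
  have hcomb : (k : ℝ) * (-κ M) * Es κ (k - 1) B < ((n - k : ℕ) : ℝ) * κ i0 * Es κ (k - 1) B := by
    calc (k : ℝ) * (-κ M) * Es κ (k - 1) B = (k : ℝ) * (-κ M * Es κ (k - 1) B) := by ring
      _ < (k : ℝ) * Es κ k B := by
          exact mul_lt_mul_of_pos_left key1 hkpos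
      _ ≤ κ i0 * (((n - k : ℕ) : ℝ) * Es κ (k - 1) B) := hsum
      _ = ((n - k : ℕ) : ℝ) * κ i0 * Es κ (k - 1) B := by ring
  have hMbound : (k : ℝ) * (-κ M) ≤ ((n - k : ℕ) : ℝ) * κ i0 :=
    le_of_lt (lt_of_mul_lt_mul_right hcomb hPk1.le)
  have hfinal : (k : ℝ) * (-κ i) ≤ ((n - k : ℕ) : ℝ) * κ i0 := by
    have : -κ i ≤ -κ M := by linarith [hord hiM]
    nlinarith [hkpos]
  have hnk : ((n - k : ℕ) : ℝ) = (n : ℝ) - (k : ℝ) := Nat.cast_sub hk2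
  rw [div_mul_eq_mul_div, le_div_iff₀ hkpos]
  rw [hnk] at hfinal
  nlinarith [hfinal]

end Main


end Auxiliary

/-- If `κ ∈ Γ_k` is ordered decreasingly and `κ i ≤ 0`, then `-κ i ≤ ((n-k)/k) * κ₁`. -/
theorem stmt_1 (n k : ℕ) (hn : 1 ≤ n) (hk1 : 1 ≤ k) (hk2 : k ≤ n)
    (κ : Fin n → ℝ) (hκ : κ ∈ GardingCone k) (hord : Antitone κ)
    (i : Fin n) (hi : κ i ≤ 0) :
    -κ i ≤ (((n : ℝ) - k) / k) * κ ⟨0, by omega⟩ := by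
  exact Main.stmt_1' n k hn hk1 hk2 κ (fun j h1 h2 => hκ j h1 h2) hord i hi
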